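/- Let {e_{ij}}_{1≤i≤j≤n−1} be integers with 0 ≤ e_{ij} ≤ m. Then {e_{ij}} is the Shi tableau of a dominant region of the m-Shi arrangement of type A_{n−1} if and only if for all i ≤ j: e_{ij} = e_{it} + e_{t+1,j} or e_{it} + e_{t+1,j} + 1 whenever e_{it} + e_{t+1,j} ≤ m − 1 for all t with i ≤ t < j, and e_{ij} = m otherwise. -/

import Mathlib

open Finset

namespace Shi

/-- Inner product of `x` with the positive root `α_{ij} = e_i - e_{j+1}` (0-indexed
`i ≤ j ≤ n-2`). -/
def inn (x : ℕ → ℝ) (i j : ℕ) : ℝ := x i - x (j + 1)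

def SumZero (n : ℕ) (x : ℕ → ℝ) : Prop := ∑ i ∈ Finset.range n, x i = 0

/-- `x` is a point of the type `A_{n-1}` ambient space lying in the open dominant chamber
and on no hyperplane of the `m`-Shi arrangement, hence an interior point of a dominant
`m`-Shi region. -/
def RegionPoint (n m : ℕ) (x : ℕ → ℝ) : Prop :=
  SumZero n x ∧
  (∀ i j, i ≤ j → j + 2 ≤ n → 0 < inn x i j) ∧
  (∀ i j, i ≤ j → j + 2 ≤ n → ∀ t : ℤ, -(m : ℤ) < t → t ≤ m → inn x i j ≠ (t : ℝ))

/-- `e` is the Shi tableau of the dominant `m`-Shi region containing `x`: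
`e_{ij} = min(⌊⟨x, α_{ij}⟩⌋, m)`, which is constant on the region and equals
`min(k_{ij}, m)` for the Shi coordinates `k` of the `m`-minimal alcove of the region. -/
def TabOf (n m : ℕ) (x : ℕ → ℝ) (e : ℕ → ℕ → ℤ) : Prop :=
  ∀ i j, i ≤ j → j + 2 ≤ n → e i j = min ⌊inn x i j⌋ (m : ℤ)

/-- `e` is the Shi tableau of some dominant region of the `m`-Shi arrangement of type
`A_{n-1}`. -/
def IsShiTab (n m : ℕ) (e : ℕ → ℕ → ℤ) : Prop :=
  ∃ x, RegionPoint n m x ∧ TabOf n m x e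

/-- `p` lies in the closure of the `m`-Shi region containing `x`. -/
def InClosure (n m : ℕ) (x p : ℕ → ℝ) : Prop :=
  SumZero n p ∧ ∀ i j, i ≤ j → j + 2 ≤ n → ∀ t : ℤ, -(m : ℤ) < t → t ≤ m →
    (((t : ℝ) < inn x i j → (t : ℝ) ≤ inn p i j) ∧ (inn x i j < t → inn p i j ≤ t))

/-- The hyperplane `H_{α_{uv}, m}` is a separating wall for the dominant `m`-Shi region
containing `x`: the region lies on the far side of the hyperplane from the fundamental
alcove, and the closure of the region contains a point of the hyperplane lying on no other
hyperplane of the arrangement (so the hyperplane supports a facet). -/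
def SepWall (n m : ℕ) (x : ℕ → ℝ) (u v : ℕ) : Prop :=
  (m : ℝ) < inn x u v ∧
  ∃ p, InClosure n m x p ∧ inn p u v = (m : ℝ) ∧
    ∀ i j, i ≤ j → j + 2 ≤ n → ∀ t : ℤ, -(m : ℤ) < t → t ≤ m →
      ¬(i = u ∧ j = v ∧ t = (m : ℤ)) → inn p i j ≠ (t : ℝ)

/-- The combinatorial criterion for `H_{α_{uv}, m}` to be a separating wall. -/
def SepCrit (m : ℕ) (e : ℕ → ℕ → ℤ) (u v : ℕ) : Prop :=
  e u v = (m : ℤ) ∧ ∀ t, u ≤ t → t < v → e u t + e (t + 1) v = (m : ℤ) - 1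

/-- The region with Shi tableau `e` has `H_{α_{uv}, m}` as a separating wall. -/
def SepWallTab (n m : ℕ) (e : ℕ → ℕ → ℤ) (u v : ℕ) : Prop :=
  ∃ x, RegionPoint n m x ∧ TabOf n m x e ∧ SepWall n m x u v

/-- A tableau function normalized to be `0` outside the staircase index domain. -/
def Normalized (n : ℕ) (e : ℕ → ℕ → ℤ) : Prop :=
  ∀ i j, ¬(i ≤ j ∧ j + 2 ≤ n) → e i j = 0


def kk (m : ℕ) (e : ℕ → ℕ → ℤ) (i j : ℕ) : ℤ :=
  if h : i < j ∧ e i j = (m : ℤ) then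
    ((Finset.Ico i j).attach.sup'
        ⟨⟨i, Finset.mem_Ico.mpr ⟨le_refl i, h.1⟩⟩, Finset.mem_attach _ _⟩
        (fun t => kk m e i t.1 + kk m e (t.1 + 1) j)) ⊔ (m : ℤ)
  else e i j
  termination_by j - i
  decreasing_by
  · have := Finset.mem_Ico.mp t.2; omega
  · have := Finset.mem_Ico.mp t.2; omega

lemma kk_eq_of_ne (m : ℕ) (e : ℕ → ℕ → ℤ) (i j : ℕ) (h : e i j ≠ (m : ℤ)) :
    kk m e i j = e i j := by
  rw [kk, dif_neg (by tauto)]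

lemma kk_main (n m : ℕ) (e : ℕ → ℕ → ℤ)
    (hbd : ∀ i j, i ≤ j → j + 2 ≤ n → 0 ≤ e i j ∧ e i j ≤ (m : ℤ))
    (hrec : ∀ i j, i ≤ j → j + 2 ≤ n → ∀ t, i ≤ t → t < j →
      ((e i t + e (t + 1) j ≤ (m : ℤ) - 1 →
        (e i j = e i t + e (t + 1) j ∨ e i j = e i t + e (t + 1) j + 1)) ∧
       ((m : ℤ) - 1 < e i t + e (t + 1) j → e i j = (m : ℤ)))) :
    ∀ d i j, j - i ≤ d → i ≤ j → j + 2 ≤ n →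
      (0 ≤ kk m e i j ∧ min (kk m e i j) (m : ℤ) = e i j) ∧
      (∀ t, i ≤ t → t < j →
        kk m e i t + kk m e (t + 1) j ≤ kk m e i j ∧
        kk m e i j ≤ kk m e i t + kk m e (t + 1) j + 1) := by
  intro d
  induction d with
  | zero =>
    intro i j hd hij hdom
    have hji : i = j := by omega
    subst hji
    have hb := hbd i i le_rfl hdom
    rw [kk, dif_neg (fun h => absurd h.1 (lt_irrefl i))]
    exact ⟨⟨hb.1, by omega⟩, fun t h1 h2 => by omega⟩
  | succ d ih =>
    intro i j hd hij hdom
    rcases eq_or_lt_of_le hij with hji | hlt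
    · subst hji
      have hb := hbd i i le_rfl hdom
      rw [kk, dif_neg (fun h => absurd h.1 (lt_irrefl i))]
      exact ⟨⟨hb.1, by omega⟩, fun t h1 h2 => by omega⟩
    -- now i < j
    -- subinterval facts
    have sub1 : ∀ t, i ≤ t → t < j →
        (0 ≤ kk m e i t ∧ min (kk m e i t) (m : ℤ) = e i t) ∧
        (0 ≤ kk m e (t+1) j ∧ min (kk m e (t+1) j) (m : ℤ) = e (t+1) j) := by
      intro t h1 h2
      exact ⟨(ih i t (by omega) h1 (by omega)).1, (ih (t+1) j (by omega) h2 (by omega)).1⟩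
    rcases eq_or_lt_of_le (hbd i j hij hdom).2 with he | he
    · -- e i j = m
      have hK : kk m e i j = ((Finset.Ico i j).attach.sup'
          ⟨⟨i, Finset.mem_Ico.mpr ⟨le_refl i, hlt⟩⟩, Finset.mem_attach _ _⟩
          (fun t => kk m e i t.1 + kk m e (t.1 + 1) j)) ⊔ (m : ℤ) := by
        rw [kk, dif_pos ⟨hlt, he⟩]
      have hmK : (m : ℤ) ≤ kk m e i j := hK ▸ le_max_right _ _
      refine ⟨⟨by omega, by omega⟩, fun t h1 h2 => ?_⟩
      constructor
      · -- lower bound: element ≤ sup'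
        rw [hK]
        refine le_trans ?_ (le_max_left _ _)
        exact Finset.le_sup' (fun t => kk m e i t.1 + kk m e (t.1 + 1) j)
          (Finset.mem_attach _ ⟨t, Finset.mem_Ico.mpr ⟨h1, h2⟩⟩)
      · -- upper bound
        rw [hK]
        have hmle : (m : ℤ) ≤ kk m e i t + kk m e (t+1) j + 1 := by
          have h1' := sub1 t h1 h2
          have hd1 : t + 2 ≤ n := by omega
          have hr := hrec i j hij hdom t h1 h2
          rcases le_or_gt (e i t + e (t + 1) j) ((m:ℤ) - 1) with hs | hs
          · have := hr.1 hs
            omega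
          · omega
        refine max_le (Finset.sup'_le _ _ ?_) hmle
        rintro ⟨u, hu⟩ -
        have hu' := Finset.mem_Ico.mp hu
        simp only
        rcases lt_trichotomy u t with h | h | h
        · -- u < t : use [i,t] cut u and [u+1,j] cut t
          have i1 := ((ih i t (by omega) h1 (by omega)).2 u hu'.1 h).1
          have i2 := ((ih (u+1) j (by omega) (by omega) (by omega)).2 t (by omega) h2).2
          omega
        · subst h; omega
        · -- t < u : use [i,u] cut t and [t+1,j] cut u
          have i1 := ((ih i u (by omega) hu'.1 (by omega)).2 t h1 h).2
          have i2 := ((ih (t+1) j (by omega) (by omega) (by omega)).2 u h hu'.2).1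
          omega
    · -- e i j < m
      have hKe : kk m e i j = e i j := kk_eq_of_ne m e i j (by omega)
      have hb := hbd i j hij hdom
      refine ⟨⟨by omega, by omega⟩, fun t h1 h2 => ?_⟩
      have hsub := sub1 t h1 h2
      have hr := hrec i j hij hdom t h1 h2
      -- e i t + e (t+1) j ≤ m - 1, else e i j = m contradiction
      have hs : e i t + e (t + 1) j ≤ (m:ℤ) - 1 := by
        by_contra hc
        have := hr.2 (by omega)
        omega
      have h1' : kk m e i t = e i t := by
        have := hbd i t h1 (by omega)
        have : e i t ≠ (m:ℤ) := by
          have := hbd (t+1) j (by omega) hdom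
          omega
        exact kk_eq_of_ne m e i t this
      have h2' : kk m e (t+1) j = e (t+1) j := by
        have := hbd i t h1 (by omega)
        have h2'' : e (t+1) j ≠ (m:ℤ) := by omega
        exact kk_eq_of_ne m e (t+1) j h2''
      have := hr.1 hs
      omega


noncomputable def GG (K : ℕ → ℕ → ℤ) (p : ℕ) : ℝ :=
  if h : p = 0 then 0 else
    ((Finset.range p).attach.sup'
        ⟨⟨0, Finset.mem_range.mpr (Nat.pos_of_ne_zero h)⟩, Finset.mem_attach _ _⟩
        (fun i => GG K i.1 + ((K i.1 (p - 1) : ℤ) : ℝ))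
      + (Finset.range p).attach.inf'
        ⟨⟨0, Finset.mem_range.mpr (Nat.pos_of_ne_zero h)⟩, Finset.mem_attach _ _⟩
        (fun i => GG K i.1 + ((K i.1 (p - 1) : ℤ) : ℝ)) + 1) / 2
  termination_by p
  decreasing_by
  · have := Finset.mem_range.mp i.2; omega
  · have := Finset.mem_range.mp i.2; omega

lemma GG_prop (n : ℕ) (K : ℕ → ℕ → ℤ)
    (hsand : ∀ i j, i ≤ j → j + 2 ≤ n → ∀ t, i ≤ t → t < j →
      K i t + K (t + 1) j ≤ K i j ∧ K i j ≤ K i t + K (t + 1) j + 1) :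
    ∀ p, p + 2 ≤ n → ∀ i, i ≤ p →
      (K i p : ℝ) < GG K (p + 1) - GG K i ∧ GG K (p + 1) - GG K i < (K i p : ℝ) + 1 := by
  intro p
  induction p using Nat.strong_induction_on with
  | _ p ihp =>
    intro hdom i hip
    have hi : i ∈ Finset.range (p + 1) := Finset.mem_range.mpr (by omega)
    set f : {x // x ∈ Finset.range (p+1)} → ℝ :=
      fun i => GG K i.1 + ((K i.1 p : ℤ) : ℝ) with hf
    have hne : (Finset.range (p + 1)).attach.Nonempty :=
      ⟨⟨0, Finset.mem_range.mpr (Nat.succ_pos p)⟩, Finset.mem_attach _ _⟩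
    set M := (Finset.range (p + 1)).attach.sup' hne f with hM
    set μ := (Finset.range (p + 1)).attach.inf' hne f with hμ
    have hGp : GG K (p + 1) = (M + μ + 1) / 2 := by
      rw [GG, dif_neg (Nat.succ_ne_zero p)]
      have : p + 1 - 1 = p := rfl
      rw [hM, hμ]
      congr 1
    -- pairwise: ∀ a b ≤ p, f a < f b + 1
    have pair : ∀ a b : ℕ, a ≤ p → b ≤ p →
        GG K a + (K a p : ℝ) < GG K b + (K b p : ℝ) + 1 := by
      intro a b ha hb
      rcases lt_trichotomy a b with h | h | h
      · obtain ⟨b', rfl⟩ : ∃ b', b = b' + 1 := ⟨b - 1, by omega⟩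
        have i1 := (ihp b' (by omega) (by omega) a (by omega)).1
        have i2 := (hsand a p (by omega) hdom b' (by omega) (by omega)).2
        have : ((K a p : ℤ) : ℝ) ≤ ((K a b' : ℤ) : ℝ) + ((K (b'+1) p : ℤ) : ℝ) + 1 := by
          exact_mod_cast i2
        linarith
      · subst h; linarith
      · obtain ⟨a', rfl⟩ : ∃ a', a = a' + 1 := ⟨a - 1, by omega⟩
        have i1 := (ihp a' (by omega) (by omega) b (by omega)).2
        have i2 := (hsand b p (by omega) hdom a' (by omega) (by omega)).1
        have : ((K b a' : ℤ) : ℝ) + ((K (a'+1) p : ℤ) : ℝ) ≤ ((K b p : ℝ)) := by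
          exact_mod_cast i2
        linarith
    have hMμ : M < μ + 1 := by
      rw [hM]
      refine Finset.sup'_lt_iff hne |>.mpr ?_
      rintro ⟨a, ha⟩ -
      have h2 : f ⟨a, ha⟩ - 1 < μ := by
        rw [hμ]
        refine Finset.lt_inf'_iff hne |>.mpr ?_
        rintro ⟨b, hb⟩ -
        have := pair a b (by have := Finset.mem_range.mp ha; omega)
          (by have := Finset.mem_range.mp hb; omega)
        simp only [hf]
        linarith
      linarith
    have hfi_le : f ⟨i, hi⟩ ≤ M := Finset.le_sup' f (Finset.mem_attach _ _)
    have hfi_ge : μ ≤ f ⟨i, hi⟩ := Finset.inf'_le f (Finset.mem_attach _ _)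
    have hfi : f ⟨i, hi⟩ = GG K i + ((K i p : ℤ) : ℝ) := rfl
    rw [hfi] at hfi_le hfi_ge
    clear_value M μ
    have h1 : GG K i + ((K i p : ℤ) : ℝ) < GG K (p+1) := by rw [hGp]; linarith
    have h2 : GG K (p+1) < GG K i + ((K i p : ℤ) : ℝ) + 1 := by rw [hGp]; linarith
    constructor <;> linarith

/-- characterization of Shi tableaux of dominant `m`-Shi regions. -/
theorem shi_tableau_iff (n m : ℕ) (hn : 2 ≤ n) (hm : 1 ≤ m) (e : ℕ → ℕ → ℤ)
    (hbd : ∀ i j, i ≤ j → j + 2 ≤ n → 0 ≤ e i j ∧ e i j ≤ (m : ℤ)) :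
    IsShiTab n m e ↔
    (∀ i j, i ≤ j → j + 2 ≤ n → ∀ t, i ≤ t → t < j →
      ((e i t + e (t + 1) j ≤ (m : ℤ) - 1 →
        (e i j = e i t + e (t + 1) j ∨ e i j = e i t + e (t + 1) j + 1)) ∧
       ((m : ℤ) - 1 < e i t + e (t + 1) j → e i j = (m : ℤ)))) := by
  constructor
  · rintro ⟨x, ⟨hsum, hpos, havoid⟩, htab⟩ i j hij hdom t hit htj
    have hdt : t + 2 ≤ n := by omega
    have ha : 0 < inn x i t := hpos i t hit hdt
    have hb : 0 < inn x (t+1) j := hpos (t+1) j (by omega) hdom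
    have hsplit : inn x i j = inn x i t + inn x (t+1) j := by
      simp only [inn]; ring
    have e1 : e i t = min ⌊inn x i t⌋ (m : ℤ) := htab i t hit hdt
    have e2 : e (t+1) j = min ⌊inn x (t+1) j⌋ (m : ℤ) := htab (t+1) j (by omega) hdom
    have e3 : e i j = min ⌊inn x i j⌋ (m : ℤ) := htab i j hij hdom
    have hfa : 0 ≤ ⌊inn x i t⌋ := Int.floor_nonneg.mpr ha.le
    have hfb : 0 ≤ ⌊inn x (t+1) j⌋ := Int.floor_nonneg.mpr hb.le
    have hlow : ⌊inn x i t⌋ + ⌊inn x (t+1) j⌋ ≤ ⌊inn x i j⌋ := by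
      rw [hsplit]
      refine Int.le_floor.mpr ?_
      push_cast
      have := Int.floor_le (inn x i t)
      have := Int.floor_le (inn x (t+1) j)
      linarith
    have hhigh : ⌊inn x i j⌋ ≤ ⌊inn x i t⌋ + ⌊inn x (t+1) j⌋ + 1 := by
      have : ⌊inn x i j⌋ < ⌊inn x i t⌋ + ⌊inn x (t+1) j⌋ + 2 := by
        rw [hsplit]
        refine Int.floor_lt.mpr ?_
        push_cast
        have := Int.lt_floor_add_one (inn x i t)
        have := Int.lt_floor_add_one (inn x (t+1) j)
        linarith
      omega
    rw [e1, e2, e3]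
    omega
  · intro hrec
    have hsand : ∀ i j, i ≤ j → j + 2 ≤ n → ∀ t, i ≤ t → t < j →
        kk m e i t + kk m e (t + 1) j ≤ kk m e i j ∧
        kk m e i j ≤ kk m e i t + kk m e (t + 1) j + 1 :=
      fun i j hij hdom => (kk_main n m e hbd hrec (j - i) i j le_rfl hij hdom).2
    have hbase : ∀ i j, i ≤ j → j + 2 ≤ n →
        0 ≤ kk m e i j ∧ min (kk m e i j) (m : ℤ) = e i j :=
      fun i j hij hdom => (kk_main n m e hbd hrec (j - i) i j le_rfl hij hdom).1
    set K := kk m e with hKdef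
    set G := GG K with hGdef
    have hGP := GG_prop n K hsand
    have hn0 : (n : ℝ) ≠ 0 := Nat.cast_ne_zero.mpr (by omega)
    set A : ℝ := (∑ i ∈ Finset.range n, G i) / n with hA
    refine ⟨fun i => A - G i, ⟨?_, ?_, ?_⟩, ?_⟩
    · -- SumZero
      unfold SumZero
      rw [Finset.sum_sub_distrib, Finset.sum_const, Finset.card_range, nsmul_eq_mul, hA,
        mul_div_cancel₀ _ hn0, sub_self]
    · -- positivity
      intro i j hij hdom
      have hG := hGP j hdom i hij
      have h0 : (0 : ℝ) ≤ ((K i j : ℤ) : ℝ) := by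
        exact_mod_cast (hbase i j hij hdom).1
      have : inn (fun i => A - G i) i j = G (j+1) - G i := by
        simp only [inn]; ring
      rw [this]
      linarith
    · -- avoid hyperplanes
      intro i j hij hdom t _ _ heq
      have hG := hGP j hdom i hij
      have hinn : inn (fun i => A - G i) i j = G (j+1) - G i := by
        simp only [inn]; ring
      rw [hinn] at heq
      rw [heq] at hG
      have h1 : K i j < t := by exact_mod_cast hG.1
      have h2 : (t : ℝ) < (K i j : ℝ) + 1 := hG.2
      have h2' : t < K i j + 1 := by exact_mod_cast h2
      omega
    · -- TabOf
      intro i j hij hdom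
      have hG := hGP j hdom i hij
      have hinn : inn (fun i => A - G i) i j = G (j+1) - G i := by
        simp only [inn]; ring
      have hfl : ⌊inn (fun i => A - G i) i j⌋ = K i j := by
        rw [hinn, Int.floor_eq_iff]
        constructor
        · linarith [hG.1]
        · exact_mod_cast hG.2
      rw [hfl]
      exact (hbase i j hij hdom).2.symm

end Shi
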